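/- Let p₁, p₂, p₃, p₄ be affinely independent points of Euclidean three-space ℝ³ (the vertices of a tetrahedron), and let R be the radius of the sphere circumscribed about them (the circumradius of the simplex with these vertices). Then R² = −(1/2)·Δ(p₁,p₂,p₃,p₄)/D(p₁,p₂,p₃,p₄). -/

import Mathlib

open Matrix


section helpers

lemma fsa4_0_0 : Fin.succAbove (0:Fin 4) (0:Fin 3) = 1 := rfl
lemma fsa4_0_1 : Fin.succAbove (0:Fin 4) (1:Fin 3) = 2 := rfl
lemma fsa4_0_2 : Fin.succAbove (0:Fin 4) (2:Fin 3) = 3 := rfl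
lemma fsa4_1_0 : Fin.succAbove (1:Fin 4) (0:Fin 3) = 0 := rfl
lemma fsa4_1_1 : Fin.succAbove (1:Fin 4) (1:Fin 3) = 2 := rfl
lemma fsa4_1_2 : Fin.succAbove (1:Fin 4) (2:Fin 3) = 3 := rfl
lemma fsa4_2_0 : Fin.succAbove (2:Fin 4) (0:Fin 3) = 0 := rfl
lemma fsa4_2_1 : Fin.succAbove (2:Fin 4) (1:Fin 3) = 1 := rfl
lemma fsa4_2_2 : Fin.succAbove (2:Fin 4) (2:Fin 3) = 3 := rfl
lemma fsa4_3_0 : Fin.succAbove (3:Fin 4) (0:Fin 3) = 0 := rfl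
lemma fsa4_3_1 : Fin.succAbove (3:Fin 4) (1:Fin 3) = 1 := rfl
lemma fsa4_3_2 : Fin.succAbove (3:Fin 4) (2:Fin 3) = 2 := rfl
lemma fsu4_0 : Fin.succ (0:Fin 3) = (1:Fin 4) := rfl
lemma fcs4_0 : Fin.castSucc (0:Fin 3) = (0:Fin 4) := rfl
lemma fsu4_1 : Fin.succ (1:Fin 3) = (2:Fin 4) := rfl
lemma fcs4_1 : Fin.castSucc (1:Fin 3) = (1:Fin 4) := rfl
lemma fsu4_2 : Fin.succ (2:Fin 3) = (3:Fin 4) := rfl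
lemma fcs4_2 : Fin.castSucc (2:Fin 3) = (2:Fin 4) := rfl
lemma fsa5_0_0 : Fin.succAbove (0:Fin 5) (0:Fin 4) = 1 := rfl
lemma fsa5_0_1 : Fin.succAbove (0:Fin 5) (1:Fin 4) = 2 := rfl
lemma fsa5_0_2 : Fin.succAbove (0:Fin 5) (2:Fin 4) = 3 := rfl
lemma fsa5_0_3 : Fin.succAbove (0:Fin 5) (3:Fin 4) = 4 := rfl
lemma fsa5_1_0 : Fin.succAbove (1:Fin 5) (0:Fin 4) = 0 := rfl
lemma fsa5_1_1 : Fin.succAbove (1:Fin 5) (1:Fin 4) = 2 := rfl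
lemma fsa5_1_2 : Fin.succAbove (1:Fin 5) (2:Fin 4) = 3 := rfl
lemma fsa5_1_3 : Fin.succAbove (1:Fin 5) (3:Fin 4) = 4 := rfl
lemma fsa5_2_0 : Fin.succAbove (2:Fin 5) (0:Fin 4) = 0 := rfl
lemma fsa5_2_1 : Fin.succAbove (2:Fin 5) (1:Fin 4) = 1 := rfl
lemma fsa5_2_2 : Fin.succAbove (2:Fin 5) (2:Fin 4) = 3 := rfl
lemma fsa5_2_3 : Fin.succAbove (2:Fin 5) (3:Fin 4) = 4 := rfl
lemma fsa5_3_0 : Fin.succAbove (3:Fin 5) (0:Fin 4) = 0 := rfl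
lemma fsa5_3_1 : Fin.succAbove (3:Fin 5) (1:Fin 4) = 1 := rfl
lemma fsa5_3_2 : Fin.succAbove (3:Fin 5) (2:Fin 4) = 2 := rfl
lemma fsa5_3_3 : Fin.succAbove (3:Fin 5) (3:Fin 4) = 4 := rfl
lemma fsa5_4_0 : Fin.succAbove (4:Fin 5) (0:Fin 4) = 0 := rfl
lemma fsa5_4_1 : Fin.succAbove (4:Fin 5) (1:Fin 4) = 1 := rfl
lemma fsa5_4_2 : Fin.succAbove (4:Fin 5) (2:Fin 4) = 2 := rfl
lemma fsa5_4_3 : Fin.succAbove (4:Fin 5) (3:Fin 4) = 3 := rfl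
lemma fsu5_0 : Fin.succ (0:Fin 4) = (1:Fin 5) := rfl
lemma fcs5_0 : Fin.castSucc (0:Fin 4) = (0:Fin 5) := rfl
lemma fsu5_1 : Fin.succ (1:Fin 4) = (2:Fin 5) := rfl
lemma fcs5_1 : Fin.castSucc (1:Fin 4) = (1:Fin 5) := rfl
lemma fsu5_2 : Fin.succ (2:Fin 4) = (3:Fin 5) := rfl
lemma fcs5_2 : Fin.castSucc (2:Fin 4) = (2:Fin 5) := rfl
lemma fsu5_3 : Fin.succ (3:Fin 4) = (4:Fin 5) := rfl
lemma fcs5_3 : Fin.castSucc (3:Fin 4) = (3:Fin 5) := rfl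


private lemma dist_sq (x y : EuclideanSpace ℝ (Fin 3)) :
    dist x y ^ 2 = (x 0 - y 0)^2 + (x 1 - y 1)^2 + (x 2 - y 2)^2 := by
  rw [EuclideanSpace.dist_eq, Real.sq_sqrt (by positivity)]
  simp [Fin.sum_univ_three, Real.dist_eq, sq_abs]

set_option maxHeartbeats 4000000 in
private lemma cm_poly (a b c d e f : ℝ) :
    (Matrix.of ![![0,1,1,1,1],![1,0,a,d,f],![1,a,0,a+d-2*b,a+f-2*c],
      ![1,d,a+d-2*b,0,d+f-2*e],![1,f,a+f-2*c,d+f-2*e,0]]).det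
    = 8 * (Matrix.of ![![a,b,c],![b,d,e],![c,e,f]]).det := by
  simp [Matrix.det_succ_row_zero, Fin.sum_univ_succ, fsa4_0_0,fsa4_0_1,fsa4_0_2,fsa4_1_0,fsa4_1_1,fsa4_1_2,fsa4_2_0,fsa4_2_1,fsa4_2_2,fsa4_3_0,fsa4_3_1,fsa4_3_2,fsu4_0,fcs4_0,fsu4_1,fcs4_1,fsu4_2,fcs4_2,fsa5_0_0,fsa5_0_1,fsa5_0_2,fsa5_0_3,fsa5_1_0,fsa5_1_1,fsa5_1_2,fsa5_1_3,fsa5_2_0,fsa5_2_1,fsa5_2_2,fsa5_2_3,fsa5_3_0,fsa5_3_1,fsa5_3_2,fsa5_3_3,fsa5_4_0,fsa5_4_1,fsa5_4_2,fsa5_4_3,fsu5_0,fcs5_0,fsu5_1,fcs5_1,fsu5_2,fcs5_2,fsu5_3,fcs5_3]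
  ring

set_option maxHeartbeats 8000000 in
private lemma delta_poly (r s12 s13 s14 s23 s24 s34 : ℝ) :
    (Matrix.of ![![0, 2*r - 2*s12, 2*r - 2*s13, 2*r - 2*s14],
      ![2*r - 2*s12, 0, 2*r - 2*s23, 2*r - 2*s24],
      ![2*r - 2*s13, 2*r - 2*s23, 0, 2*r - 2*s34],
      ![2*r - 2*s14, 2*r - 2*s24, 2*r - 2*s34, 0]]).det
    = -(2*r) * (Matrix.of ![![0,1,1,1,1],
        ![1, 0, 2*r - 2*s12, 2*r - 2*s13, 2*r - 2*s14],
        ![1, 2*r - 2*s12, 0, 2*r - 2*s23, 2*r - 2*s24],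
        ![1, 2*r - 2*s13, 2*r - 2*s23, 0, 2*r - 2*s34],
        ![1, 2*r - 2*s14, 2*r - 2*s24, 2*r - 2*s34, 0]]).det
      + 16 * (Matrix.of ![![r, s12, s13, s14], ![s12, r, s23, s24],
          ![s13, s23, r, s34], ![s14, s24, s34, r]]).det := by
  simp [Matrix.det_succ_row_zero, Fin.sum_univ_succ, fsa4_0_0,fsa4_0_1,fsa4_0_2,fsa4_1_0,fsa4_1_1,fsa4_1_2,fsa4_2_0,fsa4_2_1,fsa4_2_2,fsa4_3_0,fsa4_3_1,fsa4_3_2,fsu4_0,fcs4_0,fsu4_1,fcs4_1,fsu4_2,fcs4_2,fsa5_0_0,fsa5_0_1,fsa5_0_2,fsa5_0_3,fsa5_1_0,fsa5_1_1,fsa5_1_2,fsa5_1_3,fsa5_2_0,fsa5_2_1,fsa5_2_2,fsa5_2_3,fsa5_3_0,fsa5_3_1,fsa5_3_2,fsa5_3_3,fsa5_4_0,fsa5_4_1,fsa5_4_2,fsa5_4_3,fsu5_0,fcs5_0,fsu5_1,fcs5_1,fsu5_2,fcs5_2,fsu5_3,fcs5_3]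
  ring

set_option maxHeartbeats 2000000 in
private lemma gram4_det_zero' (x0 x1 x2 y0 y1 y2 z0 z1 z2 w0 w1 w2 r : ℝ)
    (hx : x0*x0 + x1*x1 + x2*x2 = r) (hy : y0*y0 + y1*y1 + y2*y2 = r)
    (hz : z0*z0 + z1*z1 + z2*z2 = r) (hw : w0*w0 + w1*w1 + w2*w2 = r) :
    (Matrix.of ![![r, x0*y0 + x1*y1 + x2*y2, x0*z0 + x1*z1 + x2*z2, x0*w0 + x1*w1 + x2*w2],
      ![x0*y0 + x1*y1 + x2*y2, r, y0*z0 + y1*z1 + y2*z2, y0*w0 + y1*w1 + y2*w2],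
      ![x0*z0 + x1*z1 + x2*z2, y0*z0 + y1*z1 + y2*z2, r, z0*w0 + z1*w1 + z2*w2],
      ![x0*w0 + x1*w1 + x2*w2, y0*w0 + y1*w1 + y2*w2, z0*w0 + z1*w1 + z2*w2, r]]).det = 0 := by
  have hB : (Matrix.of ![![r, x0*y0 + x1*y1 + x2*y2, x0*z0 + x1*z1 + x2*z2, x0*w0 + x1*w1 + x2*w2],
      ![x0*y0 + x1*y1 + x2*y2, r, y0*z0 + y1*z1 + y2*z2, y0*w0 + y1*w1 + y2*w2],
      ![x0*z0 + x1*z1 + x2*z2, y0*z0 + y1*z1 + y2*z2, r, z0*w0 + z1*w1 + z2*w2],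
      ![x0*w0 + x1*w1 + x2*w2, y0*w0 + y1*w1 + y2*w2, z0*w0 + z1*w1 + z2*w2, r]])
      = (Matrix.of ![![x0,y0,z0,w0],![x1,y1,z1,w1],![x2,y2,z2,w2],![0,0,0,0]])ᵀ
        * (Matrix.of ![![x0,y0,z0,w0],![x1,y1,z1,w1],![x2,y2,z2,w2],![0,0,0,0]]) := by
    ext i j
    fin_cases i <;> fin_cases j <;>
      simp [Matrix.mul_apply, Fin.sum_univ_four, Matrix.transpose_apply, Matrix.vecHead, Matrix.vecTail] <;>
      first
        | ring1
        | linear_combination -hx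
        | linear_combination -hy
        | linear_combination -hz
        | linear_combination -hw
  rw [hB, Matrix.det_mul, Matrix.det_transpose,
    Matrix.det_eq_zero_of_row_eq_zero 3 (by intro j; fin_cases j <;> rfl), zero_mul]

end helpers

/-- The Cayley–Menger determinant of four points: the determinant of the `5×5`
matrix with first row `(0,1,1,1,1)`, first column `(0,1,1,1,1)ᵀ`, and remaining
`(i,j)` entry `d_{ij}²` (with `d_{ii} = 0`). -/
noncomputable def cayleyMenger (p₁ p₂ p₃ p₄ : EuclideanSpace ℝ (Fin 3)) : ℝ :=
  Matrix.det (Matrix.of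
    ![![0, 1, 1, 1, 1],
      ![1, 0, dist p₁ p₂ ^ 2, dist p₁ p₃ ^ 2, dist p₁ p₄ ^ 2],
      ![1, dist p₁ p₂ ^ 2, 0, dist p₂ p₃ ^ 2, dist p₂ p₄ ^ 2],
      ![1, dist p₁ p₃ ^ 2, dist p₂ p₃ ^ 2, 0, dist p₃ p₄ ^ 2],
      ![1, dist p₁ p₄ ^ 2, dist p₂ p₄ ^ 2, dist p₃ p₄ ^ 2, 0]])

/-- `Δ(p₁,p₂,p₃,p₄)`: the determinant of the `4×4` matrix of squared mutual
distances (with zeros on the diagonal). -/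
noncomputable def deltaDet (p₁ p₂ p₃ p₄ : EuclideanSpace ℝ (Fin 3)) : ℝ :=
  Matrix.det (Matrix.of
    ![![0, dist p₁ p₂ ^ 2, dist p₁ p₃ ^ 2, dist p₁ p₄ ^ 2],
      ![dist p₁ p₂ ^ 2, 0, dist p₂ p₃ ^ 2, dist p₂ p₄ ^ 2],
      ![dist p₁ p₃ ^ 2, dist p₂ p₃ ^ 2, 0, dist p₃ p₄ ^ 2],
      ![dist p₁ p₄ ^ 2, dist p₂ p₄ ^ 2, dist p₃ p₄ ^ 2, 0]])

/-- The circumradius `R` of a tetrahedron with affinely independent vertices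
`p₁, p₂, p₃, p₄` in `ℝ³` satisfies `R² = -(1/2)·Δ(p₁,p₂,p₃,p₄)/D(p₁,p₂,p₃,p₄)`. -/
theorem circumradius_sq_eq_cayleyMenger_ratio
    (p₁ p₂ p₃ p₄ c : EuclideanSpace ℝ (Fin 3)) (R : ℝ)
    (hind : AffineIndependent ℝ ![p₁, p₂, p₃, p₄])
    (h₁ : dist c p₁ = R) (h₂ : dist c p₂ = R)
    (h₃ : dist c p₃ = R) (h₄ : dist c p₄ = R) :
    R ^ 2 = -(1 / 2) * (deltaDet p₁ p₂ p₃ p₄ / cayleyMenger p₁ p₂ p₃ p₄) := by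
  have hr1 : (p₁ 0 - c 0)*(p₁ 0 - c 0) + (p₁ 1 - c 1)*(p₁ 1 - c 1) + (p₁ 2 - c 2)*(p₁ 2 - c 2) = R^2 := by
    rw [← h₁, dist_sq]; ring
  have hr2 : (p₂ 0 - c 0)*(p₂ 0 - c 0) + (p₂ 1 - c 1)*(p₂ 1 - c 1) + (p₂ 2 - c 2)*(p₂ 2 - c 2) = R^2 := by
    rw [← h₂, dist_sq]; ring
  have hr3 : (p₃ 0 - c 0)*(p₃ 0 - c 0) + (p₃ 1 - c 1)*(p₃ 1 - c 1) + (p₃ 2 - c 2)*(p₃ 2 - c 2) = R^2 := by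
    rw [← h₃, dist_sq]; ring
  have hr4 : (p₄ 0 - c 0)*(p₄ 0 - c 0) + (p₄ 1 - c 1)*(p₄ 1 - c 1) + (p₄ 2 - c 2)*(p₄ 2 - c 2) = R^2 := by
    rw [← h₄, dist_sq]; ring
  have e12 : dist p₁ p₂ ^ 2 = 2*R^2 - 2*((p₁ 0 - c 0)*(p₂ 0 - c 0) + (p₁ 1 - c 1)*(p₂ 1 - c 1) + (p₁ 2 - c 2)*(p₂ 2 - c 2)) := by
    rw [dist_sq]; linear_combination hr1 + hr2
  have e13 : dist p₁ p₃ ^ 2 = 2*R^2 - 2*((p₁ 0 - c 0)*(p₃ 0 - c 0) + (p₁ 1 - c 1)*(p₃ 1 - c 1) + (p₁ 2 - c 2)*(p₃ 2 - c 2)) := by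
    rw [dist_sq]; linear_combination hr1 + hr3
  have e14 : dist p₁ p₄ ^ 2 = 2*R^2 - 2*((p₁ 0 - c 0)*(p₄ 0 - c 0) + (p₁ 1 - c 1)*(p₄ 1 - c 1) + (p₁ 2 - c 2)*(p₄ 2 - c 2)) := by
    rw [dist_sq]; linear_combination hr1 + hr4
  have e23 : dist p₂ p₃ ^ 2 = 2*R^2 - 2*((p₂ 0 - c 0)*(p₃ 0 - c 0) + (p₂ 1 - c 1)*(p₃ 1 - c 1) + (p₂ 2 - c 2)*(p₃ 2 - c 2)) := by
    rw [dist_sq]; linear_combination hr2 + hr3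
  have e24 : dist p₂ p₄ ^ 2 = 2*R^2 - 2*((p₂ 0 - c 0)*(p₄ 0 - c 0) + (p₂ 1 - c 1)*(p₄ 1 - c 1) + (p₂ 2 - c 2)*(p₄ 2 - c 2)) := by
    rw [dist_sq]; linear_combination hr2 + hr4
  have e34 : dist p₃ p₄ ^ 2 = 2*R^2 - 2*((p₃ 0 - c 0)*(p₄ 0 - c 0) + (p₃ 1 - c 1)*(p₄ 1 - c 1) + (p₃ 2 - c 2)*(p₄ 2 - c 2)) := by
    rw [dist_sq]; linear_combination hr3 + hr4
  have hkey : deltaDet p₁ p₂ p₃ p₄ = -(2*R^2) * cayleyMenger p₁ p₂ p₃ p₄ := by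
    simp only [deltaDet, cayleyMenger]
    rw [e12, e13, e14, e23, e24, e34, delta_poly,
      gram4_det_zero' (p₁ 0 - c 0) (p₁ 1 - c 1) (p₁ 2 - c 2) (p₂ 0 - c 0) (p₂ 1 - c 1) (p₂ 2 - c 2) (p₃ 0 - c 0) (p₃ 1 - c 1) (p₃ 2 - c 2) (p₄ 0 - c 0) (p₄ 1 - c 1) (p₄ 2 - c 2) (R^2) hr1 hr2 hr3 hr4]
    ring
  have f12 : dist p₁ p₂ ^ 2 = (p₂ 0 - p₁ 0)*(p₂ 0 - p₁ 0) + (p₂ 1 - p₁ 1)*(p₂ 1 - p₁ 1) + (p₂ 2 - p₁ 2)*(p₂ 2 - p₁ 2) := by rw [dist_sq]; ring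
  have f13 : dist p₁ p₃ ^ 2 = (p₃ 0 - p₁ 0)*(p₃ 0 - p₁ 0) + (p₃ 1 - p₁ 1)*(p₃ 1 - p₁ 1) + (p₃ 2 - p₁ 2)*(p₃ 2 - p₁ 2) := by rw [dist_sq]; ring
  have f14 : dist p₁ p₄ ^ 2 = (p₄ 0 - p₁ 0)*(p₄ 0 - p₁ 0) + (p₄ 1 - p₁ 1)*(p₄ 1 - p₁ 1) + (p₄ 2 - p₁ 2)*(p₄ 2 - p₁ 2) := by rw [dist_sq]; ring
  have f23 : dist p₂ p₃ ^ 2 = ((p₂ 0 - p₁ 0)*(p₂ 0 - p₁ 0) + (p₂ 1 - p₁ 1)*(p₂ 1 - p₁ 1) + (p₂ 2 - p₁ 2)*(p₂ 2 - p₁ 2)) + ((p₃ 0 - p₁ 0)*(p₃ 0 - p₁ 0) + (p₃ 1 - p₁ 1)*(p₃ 1 - p₁ 1) + (p₃ 2 - p₁ 2)*(p₃ 2 - p₁ 2)) - 2*((p₂ 0 - p₁ 0)*(p₃ 0 - p₁ 0) + (p₂ 1 - p₁ 1)*(p₃ 1 - p₁ 1) + (p₂ 2 - p₁ 2)*(p₃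 2 - p₁ 2)) := by rw [dist_sq]; ring
  have f24 : dist p₂ p₄ ^ 2 = ((p₂ 0 - p₁ 0)*(p₂ 0 - p₁ 0) + (p₂ 1 - p₁ 1)*(p₂ 1 - p₁ 1) + (p₂ 2 - p₁ 2)*(p₂ 2 - p₁ 2)) + ((p₄ 0 - p₁ 0)*(p₄ 0 - p₁ 0) + (p₄ 1 - p₁ 1)*(p₄ 1 - p₁ 1) + (p₄ 2 - p₁ 2)*(p₄ 2 - p₁ 2)) - 2*((p₂ 0 - p₁ 0)*(p₄ 0 - p₁ 0) + (p₂ 1 - p₁ 1)*(p₄ 1 - p₁ 1) + (p₂ 2 - p₁ 2)*(p₄ 2 - p₁ 2)) := by rw [dist_sq]; ring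
  have f34 : dist p₃ p₄ ^ 2 = ((p₃ 0 - p₁ 0)*(p₃ 0 - p₁ 0) + (p₃ 1 - p₁ 1)*(p₃ 1 - p₁ 1) + (p₃ 2 - p₁ 2)*(p₃ 2 - p₁ 2)) + ((p₄ 0 - p₁ 0)*(p₄ 0 - p₁ 0) + (p₄ 1 - p₁ 1)*(p₄ 1 - p₁ 1) + (p₄ 2 - p₁ 2)*(p₄ 2 - p₁ 2)) - 2*((p₃ 0 - p₁ 0)*(p₄ 0 - p₁ 0) + (p₃ 1 - p₁ 1)*(p₄ 1 - p₁ 1) + (p₃ 2 - p₁ 2)*(p₄ 2 - p₁ 2)) := by rw [dist_sq]; ring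
  set A : Matrix (Fin 3) (Fin 3) ℝ := Matrix.of ![![ p₂ 0 - p₁ 0, p₃ 0 - p₁ 0, p₄ 0 - p₁ 0 ], ![ p₂ 1 - p₁ 1, p₃ 1 - p₁ 1, p₄ 1 - p₁ 1 ], ![ p₂ 2 - p₁ 2, p₃ 2 - p₁ 2, p₄ 2 - p₁ 2 ]] with hAdef
  have hAG : (Matrix.of ![![(p₂ 0 - p₁ 0)*(p₂ 0 - p₁ 0) + (p₂ 1 - p₁ 1)*(p₂ 1 - p₁ 1) + (p₂ 2 - p₁ 2)*(p₂ 2 - p₁ 2), (p₂ 0 - p₁ 0)*(p₃ 0 - p₁ 0) + (p₂ 1 - p₁ 1)*(p₃ 1 - p₁ 1) + (p₂ 2 - p₁ 2)*(p₃ 2 - p₁ 2), (p₂ 0 - p₁ 0)*(p₄ 0 - p₁ 0) + (p₂ 1 - p₁ 1)*(p₄ 1 - p₁ 1) + (p₂ 2 - p₁ 2)*(p₄ 2 - p₁ 2)], ![(p₂ 0 - p₁ 0)*(p₃ 0 - p₁ 0) + (p₂ 1 - p₁ 1)*(p₃ 1 - p₁ 1) + (p₂ 2 - p₁ 2)*(p₃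 2 - p₁ 2), (p₃ 0 - p₁ 0)*(p₃ 0 - p₁ 0) + (p₃ 1 - p₁ 1)*(p₃ 1 - p₁ 1) + (p₃ 2 - p₁ 2)*(p₃ 2 - p₁ 2), (p₃ 0 - p₁ 0)*(p₄ 0 - p₁ 0) + (p₃ 1 - p₁ 1)*(p₄ 1 - p₁ 1) + (p₃ 2 - p₁ 2)*(p₄ 2 - p₁ 2)], ![(p₂ 0 - p₁ 0)*(p₄ 0 - p₁ 0) + (p₂ 1 - p₁ 1)*(p₄ 1 - p₁ 1) + (p₂ 2 - p₁ 2)*(p₄ 2 - p₁ 2), (p₃ 0 - p₁ 0)*(p₄ 0 - p₁ 0) + (p₃ 1 - p₁ 1)*(p₄ 1 - p₁ 1) + (p₃ 2 - p₁ 2)*(p₄ 2 - p₁ 2), (p₄ 0 - p₁ 0)*(p₄ 0 - p₁ 0) + (p₄ 1 - p₁ 1)*(p₄ 1 - p₁ 1) + (p₄ 2 - p₁ 2)*(p₄ 2 - p₁ 2)]]) = Aᵀ * A := by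
    ext i j
    fin_cases i <;> fin_cases j <;> simp [hAdef, Matrix.mul_apply, Fin.sum_univ_three, Matrix.transpose_apply, Matrix.vecHead, Matrix.vecTail] <;> ring1
  have hCM : cayleyMenger p₁ p₂ p₃ p₄ = 8 * (A.det * A.det) := by
    simp only [cayleyMenger]
    rw [f12, f13, f14, f23, f24, f34, cm_poly, hAG, Matrix.det_mul, Matrix.det_transpose]
  have hdetA : A.det ≠ 0 := by
    intro h0
    obtain ⟨g, hg0, hgA⟩ := Matrix.exists_mulVec_eq_zero_iff.mpr h0
    have hk0 := congrFun hgA 0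
    have hk1 := congrFun hgA 1
    have hk2 := congrFun hgA 2
    simp [hAdef, Matrix.mulVec, dotProduct, Fin.sum_univ_three] at hk0 hk1 hk2
    have hli : LinearIndependent ℝ (fun i : Fin 3 => ![p₁, p₂, p₃, p₄] (Fin.succ i) -ᵥ ![p₁, p₂, p₃, p₄] 0) :=
      ((affineIndependent_iff_linearIndependent_vsub ℝ ![p₁, p₂, p₃, p₄] 0).mp hind).comp
        (fun i => ⟨Fin.succ i, Fin.succ_ne_zero i⟩)
        (fun i j hij => Fin.succ_injective _ (by simpa using congrArg Subtype.val hij))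
    have hall := Fintype.linearIndependent_iff.mp hli g ?_
    · exact hg0 (funext hall)
    · rw [Fin.sum_univ_three]
      simp only [fsu4_0, fsu4_1, fsu4_2, Matrix.cons_val_zero, Matrix.cons_val_one,
        Matrix.head_cons, Matrix.cons_val_two, Matrix.tail_cons, Matrix.cons_val_three,
        vsub_eq_sub]
      ext k
      fin_cases k <;>
        simp [PiLp.add_apply, PiLp.smul_apply, PiLp.sub_apply, PiLp.zero_apply, smul_eq_mul] <;>
        [linear_combination hk0; linear_combination hk1; linear_combination hk2]
  have hCMne : cayleyMenger p₁ p₂ p₃ p₄ ≠ 0 := by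
    rw [hCM]; exact mul_ne_zero (by norm_num) (mul_ne_zero hdetA hdetA)
  rw [hkey, mul_div_assoc, div_self hCMne, mul_one]
  ring
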